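/- The full elastic energy Ψ_el(J, I₁) = (K/4)(J² − 1 − 2 ln J) + (G/2)(I₁/J − 2) with K, G > 0 satisfies Ψ_el ≥ 0 for all admissible (a, A) symmetric positive definite 2×2 matrices (where J = sqrt(det a / det A), I₁ = tr(A⁻¹ a)), with equality if and only if a = A. -/

import Mathlib

open Matrix

private lemma diagPos (M : Matrix (Fin 2) (Fin 2) ℝ) (hM : M.PosDef) (i : Fin 2) :
    0 < M i i := by
  have hne : (Pi.single i 1 : Fin 2 → ℝ) ≠ 0 := by
    intro h
    have := congrFun h i
    simp [Pi.single_apply] at this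
  have h := hM.dotProduct_mulVec_pos hne
  simpa [Matrix.mulVec, dotProduct, Pi.single_apply, Fin.sum_univ_two] using h

private lemma symmOff (M : Matrix (Fin 2) (Fin 2) ℝ) (hM : M.PosDef) : M 1 0 = M 0 1 := by
  have := congrFun (congrFun hM.1 0) 1
  simpa [Matrix.conjTranspose_apply] using this

private lemma traceInv (a A : Matrix (Fin 2) (Fin 2) ℝ) :
    (A⁻¹ * a).trace = A.det⁻¹ * (A 1 1 * a 0 0 - A 0 1 * a 1 0 - A 1 0 * a 0 1 + A 0 0 * a 1 1) := by
  rw [Matrix.inv_def, smul_mul_assoc, Matrix.trace_smul, smul_eq_mul, Ring.inverse_eq_inv]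
  congr 1
  rw [Matrix.adjugate_fin_two, Matrix.trace_fin_two]
  simp [Matrix.mul_apply, Fin.sum_univ_two]
  ring

private lemma keyIneq (p q r P Q R : ℝ) (hp : 0 < p) (hr : 0 < r) (hP : 0 < P) (hR : 0 < R)
    (hDe : 0 < p * r - q * q) (hEe : 0 < P * R - Q * Q) :
    0 < R * p - 2 * Q * q + P * r ∧
      4 * (p * r - q * q) * (P * R - Q * Q) ≤ (R * p - 2 * Q * q + P * r) ^ 2 := by
  constructor
  · have hRpPr : 0 < R * p + P * r := by positivity
    have hkey1 : (2 * Q * q) ^ 2 < (R * p + P * r) ^ 2 := by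
      nlinarith [sq_nonneg (R * p - P * r), mul_pos (mul_pos hP hR) hDe,
        mul_nonneg (mul_self_nonneg q) hEe.le]
    nlinarith [hkey1, hRpPr]
  · have hkey2 : (p * r) * ((R * p - 2 * Q * q + P * r) ^ 2 - 4 * (p * r - q * q) * (P * R - Q * Q)) =
        (p * r - q * q) * (R * p - P * r) ^ 2 + (p * (q * R - Q * r) + r * (q * P - Q * p)) ^ 2 := by
      ring
    nlinarith [hkey2, mul_pos hp hr,
      mul_nonneg hDe.le (sq_nonneg (R * p - P * r)),
      sq_nonneg (p * (q * R - Q * r) + r * (q * P - Q * p))]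

private lemma keyEq (p q r P Q R : ℝ) (hP : 0 < P) (hR : 0 < R)
    (hEe : 0 < P * R - Q * Q)
    (hDE : p * r - q * q = P * R - Q * Q)
    (hTe : R * p - 2 * Q * q + P * r = 2 * (P * R - Q * Q)) :
    p = P ∧ q = Q ∧ r = R := by
  have hlin : R * (p - P) - 2 * Q * (q - Q) + P * (r - R) = 0 := by linarith
  have hxz : (p - P) * (r - R) = (q - Q) ^ 2 := by nlinarith [hDE, hlin]
  have hy : q = Q := by
    have hy2 : (q - Q) ^ 2 ≤ 0 := by
      nlinarith [sq_nonneg (R * (p - P) - P * (r - R)), hEe, hxz, hlin]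
    have h0 : (q - Q) ^ 2 = 0 := le_antisymm hy2 (sq_nonneg _)
    have := pow_eq_zero_iff (two_ne_zero) |>.mp h0
    linarith
  have hlin2 : R * (p - P) + P * (r - R) = 0 := by rw [hy] at hlin; linarith
  have hxz0 : (p - P) * (r - R) = 0 := by rw [hxz, hy]; ring
  have hx : p = P := by
    have h1 : R * (p - P) ^ 2 = 0 := by linear_combination (p - P) * hlin2 - P * hxz0
    have h2 : (p - P) ^ 2 = 0 := by
      rcases mul_eq_zero.mp h1 with h | h
      · exact absurd h hR.ne'
      · exact h
    have := pow_eq_zero_iff (two_ne_zero) |>.mp h2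
    linarith
  have hz : r = R := by
    have h3 : P * (r - R) = 0 := by rw [hx] at hlin2; linarith
    rcases mul_eq_zero.mp h3 with h | h
    · exact absurd h hP.ne'
    · linarith
  exact ⟨hx, hy, hz⟩

private lemma logTermNonneg (J : ℝ) (hJ : 0 < J) : 0 ≤ J ^ 2 - 1 - 2 * Real.log J := by
  nlinarith [Real.log_le_sub_one_of_pos hJ, sq_nonneg (J - 1)]

private lemma logTermEqZero (J : ℝ) (hJ : 0 < J) (h : J ^ 2 - 1 - 2 * Real.log J = 0) :
    J = 1 := by
  by_contra hne
  have := Real.log_lt_sub_one_of_pos hJ hne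
  nlinarith [sq_nonneg (J - 1)]

/-- The elastic energy `Ψ_el = (K/4)(J² − 1 − 2 ln J) + (G/2)(I₁/J − 2)` with `K, G > 0`,
`J = √(det a / det A)` and `I₁ = tr(A⁻¹ a)`, is nonnegative for all symmetric positive
definite 2×2 matrices `a`, `A`, with equality if and only if `a = A`. -/
theorem stmt18 (K G : ℝ) (hK : 0 < K) (hG : 0 < G)
    (a A : Matrix (Fin 2) (Fin 2) ℝ) (ha : a.PosDef) (hA : A.PosDef)
    (J I₁ Ψel : ℝ)
    (hJ : J = Real.sqrt (a.det / A.det)) (hI : I₁ = (A⁻¹ * a).trace)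
    (hΨ : Ψel = (K/4) * (J^2 - 1 - 2 * Real.log J) + (G/2) * (I₁ / J - 2)) :
    0 ≤ Ψel ∧ (Ψel = 0 ↔ a = A) := by
  have haq : a 1 0 = a 0 1 := symmOff a ha
  have hAQ : A 1 0 = A 0 1 := symmOff A hA
  have hp : 0 < a 0 0 := diagPos a ha 0
  have hr : 0 < a 1 1 := diagPos a ha 1
  have hP : 0 < A 0 0 := diagPos A hA 0
  have hR : 0 < A 1 1 := diagPos A hA 1
  have hdeta : a.det = a 0 0 * a 1 1 - a 0 1 * a 0 1 := by
    rw [Matrix.det_fin_two, haq]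
  have hdetA : A.det = A 0 0 * A 1 1 - A 0 1 * A 0 1 := by
    rw [Matrix.det_fin_two, hAQ]
  have hD : 0 < a.det := ha.det_pos
  have hE : 0 < A.det := hA.det_pos
  have hDe : 0 < a 0 0 * a 1 1 - a 0 1 * a 0 1 := hdeta ▸ hD
  have hEe : 0 < A 0 0 * A 1 1 - A 0 1 * A 0 1 := hdetA ▸ hE
  obtain ⟨hTpos, hTsq'⟩ := keyIneq (a 0 0) (a 0 1) (a 1 1) (A 0 0) (A 0 1) (A 1 1)
    hp hr hP hR hDe hEe
  have hIT : I₁ = (A 1 1 * a 0 0 - 2 * A 0 1 * a 0 1 + A 0 0 * a 1 1) / A.det := by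
    rw [hI, traceInv, haq, hAQ, div_eq_inv_mul]
    congr 1
    ring
  have hTsq : 4 * a.det * A.det ≤ (A 1 1 * a 0 0 - 2 * A 0 1 * a 0 1 + A 0 0 * a 1 1) ^ 2 := by
    calc 4 * a.det * A.det
        = 4 * (a 0 0 * a 1 1 - a 0 1 * a 0 1) * (A 0 0 * A 1 1 - A 0 1 * A 0 1) := by
          rw [hdeta, hdetA]
      _ ≤ _ := hTsq'
  -- J facts
  have hJpos : 0 < J := by
    rw [hJ]; exact Real.sqrt_pos.2 (div_pos hD hE)
  have hJsq : J ^ 2 = a.det / A.det := by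
    rw [hJ, Real.sq_sqrt (div_pos hD hE).le]
  -- I₁ ≥ 2 J
  have h2J : 2 * J ≤ I₁ := by
    have h1 : 4 * (a.det / A.det)
        ≤ ((A 1 1 * a 0 0 - 2 * A 0 1 * a 0 1 + A 0 0 * a 1 1) / A.det) ^ 2 := by
      rw [div_pow, ← mul_div_assoc, div_le_div_iff₀ hE (pow_pos hE 2)]
      calc 4 * a.det * A.det ^ 2 = (4 * a.det * A.det) * A.det := by ring
        _ ≤ (A 1 1 * a 0 0 - 2 * A 0 1 * a 0 1 + A 0 0 * a 1 1) ^ 2 * A.det :=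
            mul_le_mul_of_nonneg_right hTsq hE.le
    have h2 : 2 * J = Real.sqrt (4 * (a.det / A.det)) := by
      rw [hJ, show (4 : ℝ) * (a.det / A.det) = 2 ^ 2 * (a.det / A.det) by norm_num,
        Real.sqrt_mul (by positivity), Real.sqrt_sq (by norm_num : (0:ℝ) ≤ 2)]
    rw [h2, hIT]
    calc Real.sqrt (4 * (a.det / A.det))
        ≤ Real.sqrt (((A 1 1 * a 0 0 - 2 * A 0 1 * a 0 1 + A 0 0 * a 1 1) / A.det) ^ 2) :=
          Real.sqrt_le_sqrt h1
      _ = _ := Real.sqrt_sq (div_pos hTpos hE).le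
  -- nonnegativity of the two terms
  have ht1 : 0 ≤ J ^ 2 - 1 - 2 * Real.log J := logTermNonneg J hJpos
  have ht2 : 0 ≤ I₁ / J - 2 := by
    rw [sub_nonneg, le_div_iff₀ hJpos]
    linarith
  have hnn : 0 ≤ Ψel := by
    rw [hΨ]
    have h1 := mul_nonneg (by positivity : (0:ℝ) ≤ K/4) ht1
    have h2 := mul_nonneg (by positivity : (0:ℝ) ≤ G/2) ht2
    linarith
  refine ⟨hnn, ?_, ?_⟩
  · -- Ψ = 0 → a = A
    intro h0
    have hk1 : 0 ≤ (K/4) * (J^2 - 1 - 2 * Real.log J) := mul_nonneg (by positivity) ht1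
    have hk2 : 0 ≤ (G/2) * (I₁ / J - 2) := mul_nonneg (by positivity) ht2
    have e1 : J ^ 2 - 1 - 2 * Real.log J = 0 := by
      have hz : (K/4) * (J^2 - 1 - 2 * Real.log J) = 0 := by
        rw [hΨ] at h0; linarith
      exact (mul_eq_zero.mp hz).resolve_left (by positivity)
    have e2 : I₁ / J - 2 = 0 := by
      have hz : (G/2) * (I₁ / J - 2) = 0 := by
        rw [hΨ] at h0; linarith
      exact (mul_eq_zero.mp hz).resolve_left (by positivity)
    have hJ1 : J = 1 := logTermEqZero J hJpos e1
    have hdet : a.det = A.det := by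
      have hq : a.det / A.det = 1 := by rw [← hJsq, hJ1]; norm_num
      field_simp at hq
      linarith
    have hI2 : I₁ = 2 := by
      rw [hJ1] at e2
      simp only [div_one] at e2
      linarith
    have hT2 : A 1 1 * a 0 0 - 2 * A 0 1 * a 0 1 + A 0 0 * a 1 1 = 2 * A.det := by
      rw [hIT] at hI2
      field_simp at hI2
      linarith
    have hDE : a 0 0 * a 1 1 - a 0 1 * a 0 1 = A 0 0 * A 1 1 - A 0 1 * A 0 1 := by
      rw [← hdeta, ← hdetA, hdet]
    have hTe : A 1 1 * a 0 0 - 2 * A 0 1 * a 0 1 + A 0 0 * a 1 1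
        = 2 * (A 0 0 * A 1 1 - A 0 1 * A 0 1) := by
      rw [← hdetA]; exact hT2
    obtain ⟨hx, hy, hz⟩ := keyEq (a 0 0) (a 0 1) (a 1 1) (A 0 0) (A 0 1) (A 1 1)
      hP hR hEe hDE hTe
    ext i j
    fin_cases i <;> fin_cases j
    · exact hx
    · exact hy
    · show a 1 0 = A 1 0
      rw [haq, hAQ]; exact hy
    · exact hz
  · -- a = A → Ψ = 0
    intro hEq
    subst hEq
    have hJ1 : J = 1 := by
      rw [hJ, div_self hE.ne', Real.sqrt_one]
    have hI2 : I₁ = 2 := by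
      rw [hI, Matrix.nonsing_inv_mul a (isUnit_iff_ne_zero.mpr hD.ne'),
        Matrix.trace_one]
      simp
    rw [hΨ, hJ1, hI2, Real.log_one]
    norm_num
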